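/- Let n ≥ 1 and work in ℤ[γ_1,…,γ_{n+1}] modulo the ideal I generated by the elementary symmetric polynomials σ_1,…,σ_{n+1} in γ_1,…,γ_{n+1}. Let γ̂_∅ = ∏_{t=1}^{n} γ_t^{n−t+1} and, for 1 ≤ i ≤ n, let γ̂_i = γ̂_∅/γ_i (the monomial γ̂_∅ with the exponent of γ_i decreased by one). Then for all 1 ≤ i, j ≤ n: γ̂_i·γ_j ∈ I if j < i or j ≥ i+2; γ̂_i·γ_j − γ̂_∅ ∈ I if j = i; and γ̂_i·γ_j + γ̂_∅ ∈ I if j = i+1. -/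

import Mathlib

open MvPolynomial

/-- The ideal of `ℤ[γ_1,…,γ_{n+1}]` generated by the elementary symmetric polynomials
`σ_1,…,σ_{n+1}`. -/
noncomputable def symIdeal (n : ℕ) : Ideal (MvPolynomial (Fin (n + 1)) ℤ) :=
  Ideal.span ((fun l => esymm (Fin (n + 1)) ℤ l) '' Set.Icc 1 (n + 1))

/-- `γ̂_∅ = ∏_{t=1}^{n} γ_t^{n−t+1}` (in `0`-indexed form, exponent `n − t`). -/
noncomputable def gammaHatEmpty (n : ℕ) : MvPolynomial (Fin (n + 1)) ℤ :=
  ∏ t : Fin n, X (Fin.castLE (Nat.le_succ n) t) ^ (n - (t : ℕ))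

/-- `γ̂_i = γ̂_∅ / γ_i`: the monomial `γ̂_∅` with the exponent of `γ_i` decreased by one. -/
noncomputable def gammaHat (n : ℕ) (i : Fin n) : MvPolynomial (Fin (n + 1)) ℤ :=
  ∏ t : Fin n, X (Fin.castLE (Nat.le_succ n) t) ^
    (if t = i then n - (t : ℕ) - 1 else n - (t : ℕ))

open Finset

namespace GammaAux

/-- the `t`-th variable, as a total function of `t : ℕ`. -/
noncomputable def vv (n t : ℕ) : MvPolynomial (Fin (n+1)) ℤ :=
  if h : t < n + 1 then X ⟨t, h⟩ else 0

/-- monomial with exponent vector `a` on the first `m` variables. -/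
noncomputable def W (n : ℕ) (a : ℕ → ℕ) (m : ℕ) : MvPolynomial (Fin (n+1)) ℤ :=
  ∏ t ∈ Finset.range m, vv n t ^ a t

/-- complete homogeneous symmetric polynomial `h_k(x_0, …, x_{m-1})`. -/
noncomputable def hS (n : ℕ) : ℕ → ℕ → MvPolynomial (Fin (n+1)) ℤ
  | _, 0 => 1
  | 0, _+1 => 0
  | m+1, k+1 => hS n m (k+1) + vv n m * hS n (m+1) k
termination_by m k => (m, k)

/-- elementary symmetric polynomial `e_k(x_0, …, x_{m-1})`. -/
noncomputable def ee (n : ℕ) : ℕ → ℕ → MvPolynomial (Fin (n+1)) ℤ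
  | _, 0 => 1
  | 0, _+1 => 0
  | m+1, k+1 => ee n m (k+1) + vv n m * ee n m k

@[simp] lemma hS_zero (n m : ℕ) : hS n m 0 = 1 := by cases m <;> simp [hS]
@[simp] lemma hS_zero_succ (n k : ℕ) : hS n 0 (k+1) = 0 := by simp [hS]
lemma hS_succ (n m k : ℕ) : hS n (m+1) (k+1) = hS n m (k+1) + vv n m * hS n (m+1) k := by
  simp [hS]

@[simp] lemma ee_zero (n m : ℕ) : ee n m 0 = 1 := by cases m <;> simp [ee]
@[simp] lemma ee_zero_succ (n k : ℕ) : ee n 0 (k+1) = 0 := by simp [ee]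
lemma ee_succ (n m k : ℕ) : ee n (m+1) (k+1) = ee n m (k+1) + vv n m * ee n m k := by
  simp [ee]

lemma hS_expand (n m k : ℕ) :
    hS n (m+1) k = ∑ d ∈ range (k+1), vv n m ^ d * hS n m (k - d) := by
  induction k with
  | zero => simp
  | succ k ih =>
    rw [hS_succ, ih, Finset.sum_range_succ' (fun d => vv n m ^ d * hS n m (k + 1 - d)) (k+1)]
    simp only [pow_zero, one_mul, Nat.sub_zero, Finset.mul_sum]
    have he : ∑ i ∈ range (k+1), vv n m * (vv n m ^ i * hS n m (k - i))
        = ∑ d ∈ range (k+1), vv n m ^ (d+1) * hS n m (k+1 - (d+1)) := by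
      apply Finset.sum_congr rfl
      intro d hd
      rw [Nat.succ_sub_succ, pow_succ]
      ring
    rw [he]
    exact add_comm _ _

lemma vv_pow_eq (n m k : ℕ) :
    vv n m ^ k = hS n (m+1) k - ∑ d ∈ range k, vv n m ^ d * hS n m (k - d) := by
  rw [hS_expand, Finset.sum_range_succ]
  simp

lemma hS_one (n m : ℕ) : hS n m 1 = ∑ t ∈ range m, vv n t := by
  induction m with
  | zero => simp
  | succ m ih => rw [hS_succ, ih, Finset.sum_range_succ]; simp

lemma ee_vanish (n : ℕ) : ∀ m k, m < k → ee n m k = 0 := by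
  intro m
  induction m with
  | zero =>
    intro k hk
    cases k with
    | zero => omega
    | succ k => simp
  | succ m ih =>
    intro k hk
    cases k with
    | zero => omega
    | succ k => rw [ee_succ, ih _ (by omega), ih _ (by omega)]; simp


/-- the finset of the first `m` variables -/
def FF (n m : ℕ) : Finset (Fin (n+1)) := Finset.univ.filter (fun i => (i : ℕ) < m)

lemma FF_last (n : ℕ) : FF n (n+1) = Finset.univ := by
  ext i; simp [FF, i.isLt]; have := i.isLt; omega

lemma FF_succ (n m : ℕ) (hm : m ≤ n) :
    FF n (m+1) = insert ⟨m, by omega⟩ (FF n m) := by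
  ext i
  simp only [FF, Finset.mem_filter, Finset.mem_univ, true_and, Finset.mem_insert, Fin.ext_iff]
  omega

lemma not_mem_FF (n m : ℕ) (hm : m ≤ n) : (⟨m, by omega⟩ : Fin (n+1)) ∉ FF n m := by
  simp [FF]

lemma ee_eq (n : ℕ) : ∀ m, m ≤ n + 1 → ∀ k,
    ee n m k = ∑ A ∈ Finset.powersetCard k (FF n m), ∏ i ∈ A, X (R := ℤ) i := by
  intro m
  induction m with
  | zero =>
    intro _ k
    have : FF n 0 = ∅ := by ext i; simp [FF]
    rw [this]
    cases k with
    | zero => simp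
    | succ k =>
      rw [Finset.powersetCard_eq_empty.2 (by simp)]
      simp
  | succ m ih =>
    intro hm k
    have hmn : m ≤ n := by omega
    rw [FF_succ n m hmn]
    cases k with
    | zero => simp
    | succ k =>
      rw [Finset.powersetCard_succ_insert (not_mem_FF n m hmn)]
      rw [Finset.sum_union]
      · rw [Finset.sum_image ?inj]
        case inj =>
          intro A hA B hB hAB
          have hA' : (⟨m, by omega⟩ : Fin (n+1)) ∉ A := by
            intro h
            exact not_mem_FF n m hmn ((Finset.mem_powersetCard.1 hA).1 h)
          have hB' : (⟨m, by omega⟩ : Fin (n+1)) ∉ B := by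
            intro h
            exact not_mem_FF n m hmn ((Finset.mem_powersetCard.1 hB).1 h)
          rw [← Finset.erase_insert hA', ← Finset.erase_insert hB', hAB]
        rw [ee_succ, ih (by omega) (k+1), ih (by omega) k]
        congr 1
        rw [Finset.mul_sum]
        apply Finset.sum_congr rfl
        intro A hA
        have hA' : (⟨m, by omega⟩ : Fin (n+1)) ∉ A := by
          intro h
          exact not_mem_FF n m hmn ((Finset.mem_powersetCard.1 hA).1 h)
        rw [Finset.prod_insert hA']
        have : vv n m = X (R := ℤ) (⟨m, by omega⟩ : Fin (n+1)) := by
          rw [vv, dif_pos (by omega)]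
        rw [this]
      · rw [Finset.disjoint_left]
        intro A hA hA2
        have h1 : (⟨m, by omega⟩ : Fin (n+1)) ∉ A := by
          intro h
          exact not_mem_FF n m hmn ((Finset.mem_powersetCard.1 hA).1 h)
        obtain ⟨B, hB, rfl⟩ := Finset.mem_image.1 hA2
        exact h1 (Finset.mem_insert_self _ _)

lemma ee_esymm (n k : ℕ) : ee n (n+1) k = esymm (Fin (n+1)) ℤ k := by
  rw [ee_eq n (n+1) le_rfl k, FF_last, esymm]


noncomputable def SS (n m k : ℕ) : MvPolynomial (Fin (n+1)) ℤ :=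
  ∑ j ∈ range (k+1), (-1 : MvPolynomial (Fin (n+1)) ℤ)^j * (ee n m j * hS n m (k - j))

noncomputable def TT (n m k : ℕ) : MvPolynomial (Fin (n+1)) ℤ :=
  ∑ j ∈ range (k+1), (-1 : MvPolynomial (Fin (n+1)) ℤ)^j * (ee n m j * hS n (m+1) (k - j))

lemma claim1 (n m k : ℕ) : SS n (m+1) (k+1) = TT n m (k+1) - vv n m * TT n m k := by
  unfold SS TT
  have h1 : ∀ j ∈ range (k+2), (-1 : MvPolynomial (Fin (n+1)) ℤ)^j * (ee n (m+1) j * hS n (m+1) (k+1 - j))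
      = (-1)^j * (ee n m j * hS n (m+1) (k+1-j))
        + (-1)^j * ((vv n m * (if j = 0 then 0 else ee n m (j-1))) * hS n (m+1) (k+1-j)) := by
    intro j _
    have hj : ee n (m+1) j = ee n m j + vv n m * (if j = 0 then 0 else ee n m (j-1)) := by
      cases j with
      | zero => simp
      | succ j => rw [ee_succ]; simp
    rw [hj]; ring
  rw [Finset.sum_congr rfl h1, Finset.sum_add_distrib, sub_eq_add_neg]
  congr 1
  rw [Finset.sum_range_succ'
    (fun j => (-1 : MvPolynomial (Fin (n+1)) ℤ)^j * ((vv n m * (if j = 0 then 0 else ee n m (j-1))) * hS n (m+1) (k+1-j))) (k+1)]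
  simp only [if_pos rfl, if_true, pow_zero, one_mul, mul_zero, zero_mul, add_zero]
  rw [Finset.mul_sum, ← Finset.sum_neg_distrib]
  apply Finset.sum_congr rfl
  intro j _
  simp only [Nat.succ_sub_succ, Nat.add_sub_cancel, Nat.sub_zero, if_neg (Nat.succ_ne_zero j)]
  rw [pow_succ]
  ring

lemma claim2 (n m k : ℕ) : TT n m (k+1) = SS n m (k+1) + vv n m * TT n m k := by
  unfold SS TT
  have h1 : ∀ j ∈ range (k+2), (-1 : MvPolynomial (Fin (n+1)) ℤ)^j * (ee n m j * hS n (m+1) (k+1 - j))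
      = (-1)^j * (ee n m j * hS n m (k+1-j))
        + (-1)^j * (ee n m j * (vv n m * (if j = k+1 then 0 else hS n (m+1) (k-j)))) := by
    intro j hj
    have hj' : j ≤ k + 1 := by
      have := Finset.mem_range.1 hj; omega
    have hh : hS n (m+1) (k+1-j) = hS n m (k+1-j) + vv n m * (if j = k+1 then 0 else hS n (m+1) (k-j)) := by
      by_cases h : j = k+1
      · subst h; simp
      · have h2 : k+1-j = (k-j)+1 := by omega
        rw [if_neg h, h2, hS_succ]
    rw [hh]; ring
  rw [Finset.sum_congr rfl h1, Finset.sum_add_distrib]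
  congr 1
  rw [Finset.sum_range_succ
    (fun j => (-1 : MvPolynomial (Fin (n+1)) ℤ)^j * (ee n m j * (vv n m * (if j = k+1 then 0 else hS n (m+1) (k-j))))) (k+1)]
  simp only [if_pos rfl, if_true, mul_zero, zero_mul, add_zero]
  rw [Finset.mul_sum]
  apply Finset.sum_congr rfl
  intro j hj
  rw [if_neg (by have := Finset.mem_range.1 hj; omega)]
  ring

lemma SS_zero (n : ℕ) : ∀ m k, SS n m (k+1) = 0 := by
  intro m
  induction m with
  | zero =>
    intro k
    unfold SS
    apply Finset.sum_eq_zero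
    intro j hj
    cases j with
    | zero => simp [Nat.sub_zero]
    | succ j => simp
  | succ m ih =>
    intro k
    rw [claim1, claim2, ih k]
    ring


lemma ee_mem (n : ℕ) {j : ℕ} (hj : 1 ≤ j) : ee n (n+1) j ∈ symIdeal n := by
  by_cases h : j ≤ n+1
  · rw [ee_esymm]
    exact Ideal.subset_span ⟨j, Set.mem_Icc.2 ⟨hj, h⟩, rfl⟩
  · rw [ee_vanish n (n+1) j (by omega)]
    exact Ideal.zero_mem _

lemma hS_full_mem (n k : ℕ) : hS n (n+1) (k+1) ∈ symIdeal n := by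
  have h0 := SS_zero n (n+1) k
  unfold SS at h0
  rw [Finset.sum_range_succ'
    (fun j => (-1 : MvPolynomial (Fin (n+1)) ℤ)^j * (ee n (n+1) j * hS n (n+1) (k+1 - j))) (k+1)]
    at h0
  simp only [pow_zero, one_mul, ee_zero, Nat.sub_zero] at h0
  have h1 : hS n (n+1) (k+1)
      = -∑ j ∈ range (k+1), (-1 : MvPolynomial (Fin (n+1)) ℤ)^(j+1) * (ee n (n+1) (j+1) * hS n (n+1) (k+1 - (j+1))) := by
    linear_combination h0
  rw [h1]
  apply neg_mem
  apply Ideal.sum_mem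
  intro j _
  exact Ideal.mul_mem_left _ _ (Ideal.mul_mem_right _ _ (ee_mem n (by omega)))

lemma hS_mem_aux (n : ℕ) : ∀ c, c ≤ n + 1 → ∀ k, c + 1 ≤ k → hS n (n+1-c) k ∈ symIdeal n := by
  intro c
  induction c with
  | zero =>
    intro _ k hk
    obtain ⟨k', rfl⟩ : ∃ k', k = k' + 1 := ⟨k - 1, by omega⟩
    simpa using hS_full_mem n k'
  | succ c ih =>
    intro hc k hk
    obtain ⟨k', rfl⟩ : ∃ k', k = k' + 1 := ⟨k - 1, by omega⟩
    have hm : n + 1 - (c+1) + 1 = n + 1 - c := by omega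
    have heq := hS_succ n (n+1-(c+1)) k'
    rw [hm] at heq
    have h2 : hS n (n+1-(c+1)) (k'+1)
        = hS n (n+1-c) (k'+1) - vv n (n+1-(c+1)) * hS n (n+1-c) k' := by
      linear_combination -heq
    rw [h2]
    exact Ideal.sub_mem _ (ih (by omega) _ (by omega))
      (Ideal.mul_mem_left _ _ (ih (by omega) _ (by omega)))

lemma hS_mem (n : ℕ) {m k : ℕ} (hm : m ≤ n + 1) (hk : n + 2 ≤ m + k) :
    hS n m k ∈ symIdeal n := by
  have h := hS_mem_aux n (n+1-m) (by omega) k (by omega)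
  rwa [show n+1-(n+1-m) = m by omega] at h


/-- maximal basis degree in the first `m` variables -/
def BB (n m : ℕ) : ℕ := ∑ t ∈ Finset.range m, (n - t)

/-- span of monomials in the first `m` variables of total degree `k` -/
noncomputable def MSub (n m k : ℕ) : Submodule ℤ (MvPolynomial (Fin (n+1)) ℤ) :=
  Submodule.span ℤ {p | ∃ a : ℕ → ℕ, (∑ t ∈ Finset.range m, a t) = k ∧ p = W n a m}

lemma mul_span_mem {R : Type*} [CommRing R] {G : R} {s : Set R} (T : Submodule ℤ R)
    (h : ∀ q ∈ s, G * q ∈ T) {p : R} (hp : p ∈ Submodule.span ℤ s) : G * p ∈ T := by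
  have hle : Submodule.span ℤ s ≤ T.comap (LinearMap.mulLeft ℤ G) := Submodule.span_le.2 h
  exact hle hp

lemma mul_span_ideal {n : ℕ} {G : MvPolynomial (Fin (n+1)) ℤ} {s : Set (MvPolynomial (Fin (n+1)) ℤ)}
    (h : ∀ q ∈ s, G * q ∈ symIdeal n) {p} (hp : p ∈ Submodule.span ℤ s) : G * p ∈ symIdeal n :=
  mul_span_mem ((symIdeal n).restrictScalars ℤ) h hp

lemma W_succ (n : ℕ) (a : ℕ → ℕ) (m : ℕ) : W n a (m+1) = W n a m * vv n m ^ a m :=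
  Finset.prod_range_succ _ _

lemma W_congr {n : ℕ} {a b : ℕ → ℕ} {m : ℕ} (h : ∀ t < m, a t = b t) : W n a m = W n b m :=
  Finset.prod_congr rfl (fun t ht => by rw [h t (Finset.mem_range.1 ht)])

lemma W_mul_W (n : ℕ) (a b : ℕ → ℕ) (m : ℕ) :
    W n a m * W n b m = W n (fun t => a t + b t) m := by
  unfold W
  rw [← Finset.prod_mul_distrib]
  exact Finset.prod_congr rfl (fun t _ => (pow_add _ _ _).symm)

lemma W_split (n : ℕ) (a : ℕ → ℕ) {l m : ℕ} (h : l ≤ m) :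
    W n a m = W n a l * ∏ t ∈ Finset.Ico l m, vv n t ^ a t := by
  unfold W
  rw [Finset.range_eq_Ico, Finset.range_eq_Ico]
  exact (Finset.prod_Ico_consecutive (fun t => vv n t ^ a t) (Nat.zero_le l) h).symm

lemma W_mul_vv {n : ℕ} (a : ℕ → ℕ) {t m : ℕ} (ht : t < m) :
    W n a m * vv n t = W n (fun s => if s = t then a t + 1 else a s) m := by
  have htm : t ∈ Finset.range m := Finset.mem_range.2 ht
  unfold W
  rw [← Finset.mul_prod_erase _ _ htm, ← Finset.mul_prod_erase _ (fun s => vv n s ^ (if s = t then a t + 1 else a s)) htm]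
  rw [if_pos rfl]
  have herase : ∏ s ∈ (Finset.range m).erase t, vv n s ^ (if s = t then a t + 1 else a s)
      = ∏ s ∈ (Finset.range m).erase t, vv n s ^ a s := by
    apply Finset.prod_congr rfl
    intro s hs
    rw [if_neg (Finset.mem_erase.1 hs).1]
  rw [herase, pow_succ]
  ring

lemma MSub_mono (n m k : ℕ) : MSub n m k ≤ MSub n (m+1) k := by
  apply Submodule.span_le.2
  rintro p ⟨b, hb, rfl⟩
  apply Submodule.subset_span
  refine ⟨fun t => if t = m then 0 else b t, ?_, ?_⟩
  · rw [Finset.sum_range_succ, if_pos rfl, add_zero, ← hb]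
    exact Finset.sum_congr rfl (fun t ht => by rw [if_neg (Nat.ne_of_lt (Finset.mem_range.1 ht))])
  · rw [W_succ, if_pos rfl, pow_zero, mul_one]
    exact (W_congr (fun t ht => by rw [if_neg (Nat.ne_of_lt ht)])).symm

lemma MSub_mul_vv (n m k : ℕ) {p} (hp : p ∈ MSub n (m+1) k) :
    vv n m * p ∈ MSub n (m+1) (k+1) := by
  refine mul_span_mem _ ?_ hp
  rintro q ⟨b, hb, rfl⟩
  rw [mul_comm, W_mul_vv b (Nat.lt_succ_self m)]
  apply Submodule.subset_span
  refine ⟨_, ?_, rfl⟩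
  rw [Finset.sum_range_succ, if_pos rfl, ← hb, Finset.sum_range_succ]
  have : ∑ t ∈ Finset.range m, (if t = m then b m + 1 else b t) = ∑ t ∈ Finset.range m, b t :=
    Finset.sum_congr rfl (fun t ht => by rw [if_neg (Nat.ne_of_lt (Finset.mem_range.1 ht))])
  omega

lemma hS_MSub (n : ℕ) : ∀ m k, hS n m k ∈ MSub n m k
  | m, 0 => by
    rw [hS_zero]
    apply Submodule.subset_span
    refine ⟨fun _ => 0, by simp, by simp [W]⟩
  | 0, k+1 => by
    rw [hS_zero_succ]; exact Submodule.zero_mem _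
  | m+1, k+1 => by
    rw [hS_succ]
    exact Submodule.add_mem _ (MSub_mono n m (k+1) (hS_MSub n m (k+1)))
      (MSub_mul_vv n m k (hS_MSub n (m+1) k))
  termination_by m k => (m, k)


lemma BB_succ (n m : ℕ) : BB n (m+1) = BB n m + (n - m) := Finset.sum_range_succ _ _

lemma lemZ (n : ℕ) : ∀ m, m ≤ n + 1 → ∀ a : ℕ → ℕ, BB n m < ∑ t ∈ Finset.range m, a t →
    W n a m ∈ symIdeal n := by
  intro m
  induction m with
  | zero => intro _ a ha; simp at ha
  | succ m ih =>
    intro hm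
    have hmn : m ≤ n := by omega
    suffices H : ∀ q (a : ℕ → ℕ), a m ≤ q → BB n (m+1) < ∑ t ∈ Finset.range (m+1), a t →
        W n a (m+1) ∈ symIdeal n by
      intro a ha; exact H (a m) a le_rfl ha
    intro q
    induction q using Nat.strong_induction_on with
    | _ q IH =>
      intro a haq hsum
      rw [Finset.sum_range_succ] at hsum
      by_cases hpre : BB n m < ∑ t ∈ Finset.range m, a t
      · rw [W_succ]
        exact Ideal.mul_mem_right _ _ (ih (by omega) a hpre)
      · push_neg at hpre
        rw [BB_succ n m] at hsum
        have ham : n + 1 - m ≤ a m := by omega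
        have hsplit : W n a (m+1) = W n a m * vv n m ^ (a m - (n + 1 - m)) * vv n m ^ (n + 1 - m) := by
          rw [W_succ, mul_assoc, ← pow_add]
          congr 2
          omega
        rw [hsplit, vv_pow_eq n m (n + 1 - m), mul_sub, Finset.mul_sum]
        apply Ideal.sub_mem
        · exact Ideal.mul_mem_left _ _ (hS_mem n (by omega) (by omega))
        · apply Ideal.sum_mem
          intro d hd
          have hd' : d < (n + 1 - m) := Finset.mem_range.1 hd
          have hterm : W n a m * vv n m ^ (a m - (n + 1 - m)) * (vv n m ^ d * hS n m ((n + 1 - m) - d))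
              = (W n a m * vv n m ^ (a m - (n + 1 - m) + d)) * hS n m ((n + 1 - m) - d) := by
            rw [pow_add]; ring
          rw [hterm]
          refine mul_span_ideal ?_ (hS_MSub n m ((n + 1 - m) - d))
          rintro p ⟨b, hb, rfl⟩
          have he : W n a m * vv n m ^ (a m - (n + 1 - m) + d) * W n b m
              = W n (fun t => if t = m then a m - (n + 1 - m) + d else a t + b t) (m+1) := by
            rw [W_succ, if_pos rfl]
            have h1 : W n (fun t => if t = m then a m - (n + 1 - m) + d else a t + b t) m
                = W n (fun t => a t + b t) m :=
              W_congr (fun t ht => by rw [if_neg (Nat.ne_of_lt ht)])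
            rw [h1, ← W_mul_W]
            ring
          rw [he]
          apply IH (a m - 1) (by omega) _ (by rw [if_pos rfl]; omega) ?_
          rw [Finset.sum_range_succ, if_pos rfl]
          have h2 : ∑ t ∈ Finset.range m, (if t = m then a m - (n + 1 - m) + d else a t + b t)
              = ∑ t ∈ Finset.range m, (a t + b t) :=
            Finset.sum_congr rfl (fun t ht => by rw [if_neg (Nat.ne_of_lt (Finset.mem_range.1 ht))])
          rw [h2, Finset.sum_add_distrib, hb, BB_succ n m]
          omega


/-- exponent vector of `γ̂_∅` -/
def ff (n : ℕ) : ℕ → ℕ := fun t => n - t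
/-- exponent vector of the gapped-at-`i`, overflowing-at-`j` monomial -/
def gf (n i j : ℕ) : ℕ → ℕ :=
  fun t => if t = i then n - i - 1 else if t = j then n + 1 - j else n - t

lemma ff_sum (n m : ℕ) : ∑ t ∈ Finset.range m, ff n t = BB n m := rfl

lemma gf_sum {n i j : ℕ} (hi : i < j) (hj : j ≤ n) :
    (∑ t ∈ Finset.range j, gf n i j t) + 1 = BB n j := by
  have him : i ∈ Finset.range j := Finset.mem_range.2 hi
  rw [← Finset.add_sum_erase _ _ him, ← ff_sum n j, ← Finset.add_sum_erase _ (ff n) him]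
  have h1 : ∑ t ∈ (Finset.range j).erase i, gf n i j t
      = ∑ t ∈ (Finset.range j).erase i, ff n t := by
    apply Finset.sum_congr rfl
    intro t ht
    have h2 := Finset.mem_erase.1 ht
    have h3 := Finset.mem_range.1 h2.2
    unfold gf ff
    rw [if_neg h2.1, if_neg (by omega)]
  rw [h1]
  unfold gf ff
  rw [if_pos rfl]
  omega

lemma lemPsi (n : ℕ) : ∀ j, j ≤ n → ∀ i, i < j →
    W n (gf n i j) (j+1) + (if j = i + 1 then (1:ℤ) else 0) • W n (ff n) (j+1)
      ∈ symIdeal n := by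
  intro j
  induction j using Nat.strong_induction_on with
  | _ j IHj =>
  intro hj i hi
  -- main decomposition
  have h1 : W n (gf n i j) (j+1) = W n (gf n i j) j * vv n j ^ ((n-j)+1) := by
    rw [W_succ]
    congr 2
    unfold gf
    rw [if_neg (by omega), if_pos rfl]
    omega
  have h2 := vv_pow_eq n j ((n-j)+1)
  rw [Finset.sum_range_succ] at h2
  have h3 : (n-j)+1-(n-j) = 1 := by omega
  rw [h3] at h2
  -- names
  set G := W n (gf n i j) j with hG
  set Wf := W n (ff n) (j+1) with hWf
  -- pieces
  have hA : G * hS n (j+1) ((n-j)+1) ∈ symIdeal n :=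
    Ideal.mul_mem_left _ _ (hS_mem n (by omega) (by omega))
  have hB : ∀ d ∈ Finset.range (n-j),
      G * (vv n j ^ d * hS n j ((n-j)+1-d)) ∈ symIdeal n := by
    intro d hd
    have hd' : d < n - j := Finset.mem_range.1 hd
    have hre : G * (vv n j ^ d * hS n j ((n-j)+1-d))
        = vv n j ^ d * (G * hS n j ((n-j)+1-d)) := by ring
    rw [hre]
    apply Ideal.mul_mem_left
    refine mul_span_ideal ?_ (hS_MSub n j ((n-j)+1-d))
    rintro q ⟨b, hb, rfl⟩
    rw [hG, W_mul_W]
    apply lemZ n j (by omega)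
    rw [Finset.sum_add_distrib, hb]
    have := gf_sum hi hj
    omega
  -- the last piece, term by term
  have hC : ∀ t ∈ Finset.range j,
      G * vv n t * vv n j ^ (n-j)
        - (if t = i then (1:ℤ) else if t = i + 1 then -1 else 0) • Wf ∈ symIdeal n := by
    intro t ht
    have ht' : t < j := Finset.mem_range.1 ht
    rcases lt_trichotomy t i with htl | hte | htr
    · -- t < i : pure ideal membership
      rw [if_neg (by omega), if_neg (by omega), zero_smul, sub_zero]
      rw [hG, W_mul_vv _ ht']
      rw [W_split n _ (show t+1 ≤ j by omega)]
      apply Ideal.mul_mem_right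
      apply Ideal.mul_mem_right
      apply lemZ n (t+1) (by omega)
      rw [Finset.sum_range_succ, if_pos rfl]
      have hc : ∀ s ∈ Finset.range t,
          (if s = t then gf n i j t + 1 else gf n i j s) = n - s := by
        intro s hs
        have hs' := Finset.mem_range.1 hs
        rw [if_neg (by omega)]
        unfold gf
        rw [if_neg (by omega), if_neg (by omega)]
      have hgt : gf n i j t = n - t := by
        unfold gf; rw [if_neg (by omega), if_neg (by omega)]
      rw [Finset.sum_congr rfl hc, hgt,
        show (∑ s ∈ Finset.range t, (n-s)) = BB n t from rfl, BB_succ]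
      omega
    · -- t = i : exact equality with Wf
      subst hte
      rw [if_pos rfl, one_smul]
      have he : G * vv n t * vv n j ^ (n-j) = Wf := by
        rw [hG, W_mul_vv _ ht']
        have hgff : W n (fun s => if s = t then gf n t j t + 1 else gf n t j s) j
            = W n (ff n) j := by
          apply W_congr
          intro s hs
          unfold gf ff
          by_cases hsi : s = t
          · subst hsi
            rw [if_pos rfl, if_pos rfl]
            omega
          · rw [if_neg hsi, if_neg hsi, if_neg (by omega)]
        rw [hgff, hWf, W_succ]
        rfl
      rw [he, sub_self]
      exact Ideal.zero_mem _
    · -- i < t < j : use induction hypothesis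
      rw [if_neg (by omega)]
      have key := IHj t ht' (by omega) i htr
      have hsplit : G * vv n t
          = W n (gf n i t) (t+1) * ∏ s ∈ Finset.Ico (t+1) j, vv n s ^ ff n s := by
        rw [hG, W_mul_vv _ ht', W_split n _ (show t+1 ≤ j by omega)]
        congr 1
        · apply W_congr
          intro s hs
          unfold gf
          by_cases hst : s = t
          · rw [if_pos hst, hst, if_neg (by omega), if_neg (by omega), if_neg (by omega), if_pos rfl]
            omega
          · rw [if_neg hst]
            by_cases hsi : s = i
            · rw [if_pos hsi, if_pos hsi]
            · rw [if_neg hsi, if_neg hsi, if_neg (by omega), if_neg (by omega)]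
        · apply Finset.prod_congr rfl
          intro s hs
          have hs' := Finset.mem_Ico.1 hs
          congr 1
          unfold gf ff
          rw [if_neg (by omega), if_neg (by omega), if_neg (by omega)]
      have hWfsplit : W n (ff n) (t+1) * ((∏ s ∈ Finset.Ico (t+1) j, vv n s ^ ff n s) * vv n j ^ (n-j))
          = Wf := by
        rw [hWf]
        rw [show W n (ff n) (j+1) = W n (ff n) j * vv n j ^ (n-j) from by rw [W_succ]; rfl]
        rw [show W n (ff n) j = W n (ff n) (t+1) * ∏ s ∈ Finset.Ico (t+1) j, vv n s ^ ff n s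
          from W_split n (ff n) (by omega)]
        ring
      have hmul := Ideal.mul_mem_right
        ((∏ s ∈ Finset.Ico (t+1) j, vv n s ^ ff n s) * vv n j ^ (n-j)) _ key
      have hexp : (W n (gf n i t) (t+1) + (if t = i + 1 then (1:ℤ) else 0) • W n (ff n) (t+1))
            * ((∏ s ∈ Finset.Ico (t+1) j, vv n s ^ ff n s) * vv n j ^ (n-j))
          = G * vv n t * vv n j ^ (n-j)
            + (if t = i + 1 then (1:ℤ) else 0) • Wf := by
        rw [add_mul, smul_mul_assoc, hWfsplit, hsplit]
        ring
      rw [hexp] at hmul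
      have hflip : G * vv n t * vv n j ^ (n-j) - (if t = i + 1 then (-1:ℤ) else 0) • Wf
          = G * vv n t * vv n j ^ (n-j) + (if t = i + 1 then (1:ℤ) else 0) • Wf := by
        by_cases h : t = i + 1
        · rw [if_pos h, if_pos h]
          simp [sub_eq_add_neg]
        · rw [if_neg h, if_neg h]
          simp
      rw [hflip]
      exact hmul
  -- assembling everything
  have hBsum : ∑ d ∈ Finset.range (n-j), G * (vv n j ^ d * hS n j ((n-j)+1-d)) ∈ symIdeal n :=
    Ideal.sum_mem _ hB
  have hCsum : (∑ t ∈ Finset.range j, G * vv n t * vv n j ^ (n-j))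
      - (∑ t ∈ Finset.range j, (if t = i then (1:ℤ) else if t = i+1 then -1 else 0)) • Wf
      ∈ symIdeal n := by
    rw [Finset.sum_smul, ← Finset.sum_sub_distrib]
    exact Ideal.sum_mem _ hC
  have hkap : (∑ t ∈ Finset.range j, (if t = i then (1:ℤ) else if t = i+1 then -1 else 0))
      = if j = i + 1 then 1 else 0 := by
    have hdecomp : ∀ t ∈ Finset.range j, (if t = i then (1:ℤ) else if t = i+1 then -1 else 0)
        = (if t = i then (1:ℤ) else 0) + (if t = i+1 then (-1:ℤ) else 0) := by
      intro t _
      by_cases h1 : t = i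
      · rw [if_pos h1, if_pos h1, if_neg (by omega), add_zero]
      · rw [if_neg h1, if_neg h1, zero_add]
    rw [Finset.sum_congr rfl hdecomp, Finset.sum_add_distrib,
      Finset.sum_ite_eq' (Finset.range j) i (fun _ => (1:ℤ)),
      Finset.sum_ite_eq' (Finset.range j) (i+1) (fun _ => (-1:ℤ)),
      if_pos (Finset.mem_range.2 hi)]
    by_cases h2 : i + 1 < j
    · rw [if_pos (Finset.mem_range.2 h2), if_neg (by omega)]
      ring
    · rw [if_neg (by rw [Finset.mem_range]; omega), if_pos (by omega), add_zero]
  have hsum2 : G * (vv n j ^ (n-j) * hS n j 1) = ∑ t ∈ Finset.range j, G * vv n t * vv n j ^ (n-j) := by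
    rw [hS_one, Finset.mul_sum, Finset.mul_sum]
    apply Finset.sum_congr rfl
    intro t _
    ring
  have hfin : W n (gf n i j) (j+1) + (if j = i+1 then (1:ℤ) else 0) • Wf
      = G * hS n (j+1) ((n-j)+1)
        - (∑ d ∈ Finset.range (n-j), G * (vv n j ^ d * hS n j ((n-j)+1-d)))
        - ((∑ t ∈ Finset.range j, G * vv n t * vv n j ^ (n-j))
            - (if j = i+1 then (1:ℤ) else 0) • Wf) := by
    rw [h1, h2, ← hsum2, mul_sub, mul_add, Finset.mul_sum]
    ring
  rw [hfin]
  exact Ideal.sub_mem _ (Ideal.sub_mem _ hA hBsum) (hkap ▸ hCsum)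


lemma vv_def (n t : ℕ) (h : t < n + 1) : vv n t = X (R := ℤ) ⟨t, h⟩ := dif_pos h

lemma X_castLE (n : ℕ) (t : Fin n) :
    X (R := ℤ) (Fin.castLE (Nat.le_succ n) t) = vv n t.val := by
  rw [vv_def n t.val (by omega)]
  rfl

lemma gammaHatEmpty_eq (n : ℕ) : gammaHatEmpty n = W n (ff n) n := by
  unfold gammaHatEmpty W
  rw [← Fin.prod_univ_eq_prod_range (fun t => vv n t ^ ff n t) n]
  apply Finset.prod_congr rfl
  intro t _
  rw [X_castLE]
  rfl

lemma gammaHat_eq (n : ℕ) (i : Fin n) :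
    gammaHat n i = W n (fun t => if t = i.val then n - t - 1 else n - t) n := by
  unfold gammaHat W
  rw [← Fin.prod_univ_eq_prod_range (fun t => vv n t ^ (if t = i.val then n - t - 1 else n - t)) n]
  apply Finset.prod_congr rfl
  intro t _
  rw [X_castLE]
  congr 1
  by_cases h : t = i
  · subst h
    simp
  · rw [if_neg h, if_neg (fun hh => h (Fin.ext hh))]


end GammaAux

open GammaAux in
theorem gammaHat_mul_gamma (n : ℕ) (hn : 1 ≤ n) (i j : Fin n) :
    (((j : ℕ) < (i : ℕ) ∨ (i : ℕ) + 2 ≤ (j : ℕ)) →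
        gammaHat n i * X (Fin.castLE (Nat.le_succ n) j) ∈ symIdeal n) ∧
    (j = i →
        gammaHat n i * X (Fin.castLE (Nat.le_succ n) j) - gammaHatEmpty n ∈ symIdeal n) ∧
    ((j : ℕ) = (i : ℕ) + 1 →
        gammaHat n i * X (Fin.castLE (Nat.le_succ n) j) + gammaHatEmpty n ∈ symIdeal n) := by
  have hjn : (j : ℕ) < n := j.isLt
  have hin : (i : ℕ) < n := i.isLt
  have hmul : gammaHat n i * X (Fin.castLE (Nat.le_succ n) j)
      = W n (fun s => if s = j.val then (if j.val = i.val then n - j.val - 1 else n - j.val) + 1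
          else if s = i.val then n - s - 1 else n - s) n := by
    rw [gammaHat_eq, X_castLE, W_mul_vv _ hjn]
  -- case j > i : relate to lemPsi
  have hgt : (i : ℕ) < (j : ℕ) →
      gammaHat n i * X (Fin.castLE (Nat.le_succ n) j)
        + (if j.val = i.val + 1 then (1:ℤ) else 0) • gammaHatEmpty n ∈ symIdeal n := by
    intro hij
    have hkey := lemPsi n j.val (by omega) i.val hij
    have hT := Ideal.mul_mem_right (∏ s ∈ Finset.Ico (j.val+1) n, vv n s ^ ff n s) _ hkey
    have hWsplit : W n (fun s => if s = j.val then (if j.val = i.val then n - j.val - 1 else n - j.val) + 1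
          else if s = i.val then n - s - 1 else n - s) n
        = W n (gf n i.val j.val) (j.val+1) * ∏ s ∈ Finset.Ico (j.val+1) n, vv n s ^ ff n s := by
      rw [W_split n (fun s => if s = j.val then (if j.val = i.val then n - j.val - 1 else n - j.val) + 1
          else if s = i.val then n - s - 1 else n - s) (show j.val+1 ≤ n by omega)]
      congr 1
      · apply W_congr
        intro s hs
        unfold gf
        split_ifs <;> omega
      · apply Finset.prod_congr rfl
        intro s hs
        have hs' := Finset.mem_Ico.1 hs
        congr 1
        unfold ff
        split_ifs <;> omega
    have hexp : (W n (gf n i.val j.val) (j.val+1)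
          + (if j.val = i.val + 1 then (1:ℤ) else 0) • W n (ff n) (j.val+1))
          * ∏ s ∈ Finset.Ico (j.val+1) n, vv n s ^ ff n s
        = gammaHat n i * X (Fin.castLE (Nat.le_succ n) j)
          + (if j.val = i.val + 1 then (1:ℤ) else 0) • gammaHatEmpty n := by
      rw [add_mul, smul_mul_assoc]
      congr 1
      · rw [hmul, hWsplit]
      · congr 1
        rw [gammaHatEmpty_eq,
          show W n (ff n) n = W n (ff n) (j.val+1) * ∏ s ∈ Finset.Ico (j.val+1) n, vv n s ^ ff n s
            from W_split n (ff n) (by omega)]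
    rw [hexp] at hT
    exact hT
  refine ⟨?_, ?_, ?_⟩
  · rintro (hlt | hge)
    · -- j < i
      rw [hmul, W_split n _ (show j.val+1 ≤ n by omega)]
      apply Ideal.mul_mem_right
      apply lemZ n (j.val+1) (by omega)
      rw [Finset.sum_range_succ, BB_succ]
      have h2 : ∑ s ∈ Finset.range j.val,
          (if s = j.val then (if j.val = i.val then n - j.val - 1 else n - j.val) + 1
            else if s = i.val then n - s - 1 else n - s) = BB n j.val := by
        unfold BB
        apply Finset.sum_congr rfl
        intro s hs
        have hs' := Finset.mem_range.1 hs
        split_ifs <;> omega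
      rw [h2, if_pos rfl, if_neg (show ¬(j.val : ℕ) = i.val by omega)]
      omega
    · -- j ≥ i + 2
      have h := hgt (by omega)
      rw [if_neg (by omega), zero_smul, add_zero] at h
      exact h
  · -- j = i
    intro hji
    subst hji
    have heq : gammaHat n j * X (Fin.castLE (Nat.le_succ n) j) = gammaHatEmpty n := by
      rw [hmul, gammaHatEmpty_eq]
      apply W_congr
      intro s hs
      by_cases h : s = j.val
      · rw [if_pos h, if_pos rfl, h]
        show n - j.val - 1 + 1 = ff n j.val
        unfold ff
        omega
      · rw [if_neg h, if_neg h]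
        rfl
    rw [heq, sub_self]
    exact Ideal.zero_mem _
  · -- j = i + 1
    intro hji
    have h := hgt (by omega)
    rw [if_pos hji, one_smul] at h
    exact h
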